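/- Let A and B be valuation rings (local integral domains) and suppose τ : MR(A) → MR(B) is a multiplicative bijection for which there exists a field isomorphism τ̄ : A/m_A → B/m_B with τ̄ ∘ s_A = s_B ∘ τ. Then τ induces an isomorphism of ordered abelian groups between the value groups Frac(A)^×/A^× and Frac(B)^×/B^×. -/

import Mathlib

open IsLocalRing

variable (A : Type*) [CommRing A] [IsLocalRing A]

/-- `z ~ z'` iff `z' ∈ z·(1 + m)`, where `m` is the maximal ideal. -/
def mrel : A → A → Prop := fun z z' => ∃ u ∈ maximalIdeal A, z' = z * (1 + u)
/-- The set of multiplicative residues `MR(A) = A/(1+m)`. -/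
def MR : Type _ := Quot (mrel A)

variable {A}

/-- The multiplicative residue of an element of `A`. -/
def mres (a : A) : MR A := Quot.mk _ a

lemma mrel_refl (a : A) : mrel A a a := ⟨0, zero_mem _, by ring⟩

lemma mrel_mul {z z' w w' : A} (h1 : mrel A z z') (h2 : mrel A w w') :
    mrel A (z * w) (z' * w') := by
  obtain ⟨u, hu, rfl⟩ := h1
  obtain ⟨v, hv, rfl⟩ := h2
  exact ⟨u + v + u * v, add_mem (add_mem hu hv) (Ideal.mul_mem_right _ _ hu), by ring⟩

/-- The commutative monoid structure on `MR(A)` induced by multiplication on `A`. -/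
noncomputable instance : CommMonoid (MR A) where
  mul := Quot.map₂ (· * ·) (fun _ _ _ h => mrel_mul (mrel_refl _) h)
    (fun _ _ _ h => mrel_mul h (mrel_refl _))
  one := mres (1 : A)
  mul_assoc := by rintro ⟨a⟩ ⟨b⟩ ⟨c⟩; exact congrArg (Quot.mk _) (mul_assoc a b c)
  one_mul := by rintro ⟨a⟩; exact congrArg (Quot.mk _) (one_mul a)
  mul_one := by rintro ⟨a⟩; exact congrArg (Quot.mk _) (mul_one a)
  mul_comm := by rintro ⟨a⟩ ⟨b⟩; exact congrArg (Quot.mk _) (mul_comm a b)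

/-- The natural multiplicative map `s_A : MR(A) → A/m`. -/
noncomputable def sA : MR A → A ⧸ maximalIdeal A :=
  Quot.lift (residue A) (by
    rintro a b ⟨u, hu, rfl⟩
    have h0 : residue A u = 0 := Ideal.Quotient.eq_zero_iff_mem.mpr hu
    simp [map_mul, map_add, h0]
    rfl)

section Helpers

variable {A : Type*} [CommRing A] [IsLocalRing A]

lemma isUnit_one_add_mem' {u : A} (hu : u ∈ maximalIdeal A) : IsUnit (1 + u) := by
  by_contra h
  have h1 : (1 : A) + u ∈ maximalIdeal A := (mem_maximalIdeal _).mpr h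
  have h2 : (1 : A) ∈ maximalIdeal A := by simpa using sub_mem h1 hu
  exact (maximalIdeal.isMaximal A).ne_top ((Ideal.eq_top_iff_one _).mpr h2)

lemma mrel_symm' {a b : A} (h : mrel A a b) : mrel A b a := by
  obtain ⟨u, hu, rfl⟩ := h
  obtain ⟨w, hw⟩ := isUnit_one_add_mem' hu
  have hinv : (↑w⁻¹ : A) * (1 + u) = 1 := by rw [← hw]; exact w.inv_mul
  refine ⟨(↑w⁻¹ : A) - 1, ?_, ?_⟩
  · have : (↑w⁻¹ : A) - 1 = -(↑w⁻¹ * u) := by linear_combination hinv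
    rw [this]
    exact neg_mem (Ideal.mul_mem_left _ _ hu)
  · have hmul : (1 + u) * (↑w⁻¹ : A) = 1 := by rw [← hw]; exact w.mul_inv
    calc a = a * ((1 + u) * ↑w⁻¹) := by rw [hmul, mul_one]
    _ = a * (1 + u) * (1 + ((↑w⁻¹ : A) - 1)) := by ring

lemma mrel_trans' {a b c : A} (h1 : mrel A a b) (h2 : mrel A b c) : mrel A a c := by
  obtain ⟨u, hu, rfl⟩ := h1; obtain ⟨v, hv, rfl⟩ := h2
  exact ⟨u + v + u * v, add_mem (add_mem hu hv) (Ideal.mul_mem_right _ _ hu), by ring⟩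

lemma mres_eq_iff {a b : A} : (mres a : MR A) = mres b ↔ mrel A a b := by
  constructor
  · intro h
    have h' := Quot.eq.mp h
    clear h
    induction h' with
    | rel x y h => exact h
    | refl x => exact mrel_refl x
    | symm x y _ ih => exact mrel_symm' ih
    | trans x y z _ _ ih1 ih2 => exact mrel_trans' ih1 ih2
  · exact fun h => Quot.sound h

lemma mres_mul (a b : A) : (mres a : MR A) * mres b = mres (a * b) := rfl

lemma sA_mres (a : A) : sA (mres a) = residue A a := rfl

lemma mres_eq_zero {a : A} (h : (mres a : MR A) = mres 0) : a = 0 := by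
  obtain ⟨u, hu, he⟩ := mrel_symm' (mres_eq_iff.mp h)
  simpa using he

end Helpers

section Aux

open ValuationRing

variable {A B : Type*} [CommRing A] [IsLocalRing A] [CommRing B] [IsLocalRing B]
  [IsDomain A] [ValuationRing A] [IsDomain B] [ValuationRing B]

lemma val_algebraMap_unit {b : B} (hb : IsUnit b) :
    valuation B (FractionRing B) (algebraMap B (FractionRing B) b) = 1 := by
  obtain ⟨w, rfl⟩ := hb
  exact Quotient.sound' ⟨w, by simp [Units.smul_def, Algebra.smul_def]⟩

lemma aux_hom (τ : MR A → MR B) (hinj : Function.Injective τ)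
    (hmul : ∀ x y : MR A, τ (x * y) = τ x * τ y)
    (hzero : τ (mres 0) = mres 0)
    (hunit : ∀ a : A, IsUnit a → ∀ b : B, τ (mres a) = mres b → IsUnit b) :
    ∃ e : ValueGroup A (FractionRing A) → ValueGroup B (FractionRing B),
      (∀ x y, e (x * y) = e x * e y) ∧ (∀ x y, x ≤ y → e x ≤ e y) ∧
      ∀ (a : A) (b : B), τ (mres a) = mres b →
        e (valuation A (FractionRing A) (algebraMap A (FractionRing A) a)) =
          valuation B (FractionRing B) (algebraMap B (FractionRing B) b) := by
  classical
  set K := FractionRing A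
  set L := FractionRing B
  set β : A → B := fun a => (τ (mres a)).out with hβdef
  have hβ : ∀ a, τ (mres a) = mres (β a) := fun a => (Quot.out_eq _).symm
  have hβ0 : β 0 = 0 := mres_eq_zero ((hβ 0).symm.trans hzero)
  have hβne : ∀ a : A, a ≠ 0 → β a ≠ 0 := by
    intro a ha hb
    apply ha
    apply mres_eq_zero
    apply hinj
    rw [hzero, hβ a, hb]
  set f : A → ValueGroup B L := fun a => valuation B L (algebraMap B L (β a)) with hfdef
  have hfmul : ∀ a a' : A, f (a * a') = f a * f a' := by
    intro a a'
    have h1' : τ (mres (a * a')) = mres (β a * β a') := by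
      rw [← mres_mul a a', hmul, hβ, hβ, mres_mul]
    have h1 : (mres (β (a * a')) : MR B) = mres (β a * β a') := (hβ _).symm.trans h1'
    obtain ⟨u, hu, he⟩ := mres_eq_iff.mp h1
    have : f a * f a' = valuation B L (algebraMap B L (β a * β a')) := by
      simp [hfdef, map_mul]
    rw [this, he, map_mul, map_mul, val_algebraMap_unit (isUnit_one_add_mem' hu), mul_one]
  have hf1 : ∀ a : A, IsUnit a → f a = 1 := fun a ha =>
    val_algebraMap_unit (hunit a ha (β a) (hβ a))
  have hfne : ∀ a : A, a ≠ 0 → f a ≠ 0 := by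
    intro a ha
    exact (Valuation.ne_zero_iff _).mpr
      ((map_ne_zero_iff _ (IsFractionRing.injective B L)).mpr (hβne a ha))
  have hf0 : f 0 = 0 := by
    simp [hfdef, hβ0]
  set F : A →* ValueGroup B L :=
    { toFun := f, map_one' := hf1 1 isUnit_one, map_mul' := hfmul } with hFdef
  have hFu : ∀ y : (nonZeroDivisors A), IsUnit (F y) :=
    fun y => isUnit_iff_ne_zero.mpr (hfne y (nonZeroDivisors.ne_zero y.2))
  set g : K →* ValueGroup B L :=
    (IsLocalization.toLocalizationMap (nonZeroDivisors A) K).lift hFu with hgdef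
  have hg : ∀ a : A, g (algebraMap A K a) = f a := by
    intro a
    have := (IsLocalization.toLocalizationMap (nonZeroDivisors A) K).lift_eq hFu a
    rwa [IsLocalization.toLocalizationMap_apply] at this
  have hgwd : ∀ (x y : K), (MulAction.orbitRel Aˣ K).r x y → g x = g y := by
    intro x y h
    obtain ⟨u, rfl⟩ := h
    show g ((u : A) • y) = g y
    rw [Algebra.smul_def, map_mul, hg, hf1 _ u.isUnit, one_mul]
  set e : ValueGroup A K → ValueGroup B L := Quotient.lift g hgwd with hedef
  have he : ∀ x : K, e (valuation A K x) = g x := fun x => rfl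
  refine ⟨e, ?_, ?_, ?_⟩
  · rintro ⟨x⟩ ⟨y⟩
    exact map_mul g x y
  · rintro ⟨x⟩ ⟨y⟩ ⟨c, rfl⟩
    show g (c • y) ≤ g y
    rw [Algebra.smul_def, map_mul, hg]
    calc f c * g y ≤ 1 * g y := by
          apply mul_le_mul_left
          exact ⟨β c, by rw [Algebra.smul_def, mul_one]⟩
    _ = g y := one_mul _
  · intro a b hab
    have h1 : (mres b : MR B) = mres (β a) := by rw [← hab, hβ]
    obtain ⟨u, hu, he'⟩ := mres_eq_iff.mp h1
    rw [he, hg]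
    show valuation B L (algebraMap B L (β a)) = valuation B L (algebraMap B L b)
    rw [he', map_mul, map_mul, val_algebraMap_unit (isUnit_one_add_mem' hu), mul_one]

lemma aux_fix_id {A : Type*} [CommRing A] [IsDomain A] [ValuationRing A]
    (h : ValueGroup A (FractionRing A) → ValueGroup A (FractionRing A))
    (hm : ∀ x y, h (x * y) = h x * h y)
    (hfix : ∀ a : A, h (valuation A (FractionRing A) (algebraMap A (FractionRing A) a)) =
      valuation A (FractionRing A) (algebraMap A (FractionRing A) a)) :
    ∀ γ, h γ = γ := by
  set K := FractionRing A
  have key : ∀ x : K, h (valuation A K x) = valuation A K x := by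
    intro x
    obtain ⟨a, s, hs, rfl⟩ : ∃ a b : A, _ := IsFractionRing.div_surjective A x
    have hsne : algebraMap A K s ≠ 0 :=
      IsFractionRing.to_map_ne_zero_of_mem_nonZeroDivisors hs
    have hvs : valuation A K (algebraMap A K s) ≠ 0 := (Valuation.ne_zero_iff _).mpr hsne
    apply mul_right_cancel₀ hvs
    have hxs : algebraMap A K a / algebraMap A K s * algebraMap A K s = algebraMap A K a :=
      div_mul_cancel₀ _ hsne
    calc h (valuation A K (algebraMap A K a / algebraMap A K s)) * valuation A K (algebraMap A K s)
        = h (valuation A K (algebraMap A K a / algebraMap A K s)) *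
            h (valuation A K (algebraMap A K s)) := by rw [hfix]
      _ = h (valuation A K (algebraMap A K a / algebraMap A K s) *
            valuation A K (algebraMap A K s)) := (hm _ _).symm
      _ = h (valuation A K (algebraMap A K a)) := by rw [← map_mul, hxs]
      _ = valuation A K (algebraMap A K a) := hfix a
      _ = _ := by rw [← map_mul, hxs]
  rintro ⟨x⟩
  exact key x

end Aux

open ValuationRing in
/-- If `A`, `B` are valuation rings and `τ : MR(A) → MR(B)` is a multiplicative bijection
compatible, via a field isomorphism of the residue fields, with the natural maps `s_A`,
`s_B`, then `τ` induces an isomorphism of ordered (abelian) value groups of `Frac(A)` and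
`Frac(B)`. -/
theorem valueGroup_orderIso_of_MR_iso
    {B : Type*} [CommRing B] [IsLocalRing B]
    [IsDomain A] [ValuationRing A] [IsDomain B] [ValuationRing B]
    (τ : MR A → MR B) (hbij : Function.Bijective τ)
    (hmul : ∀ x y : MR A, τ (x * y) = τ x * τ y)
    (hcompat : ∃ σ : (A ⧸ maximalIdeal A) ≃+* (B ⧸ maximalIdeal B),
      ∀ x : MR A, σ (sA x) = sA (τ x)) :
    ∃ e : ValueGroup A (FractionRing A) ≃*o ValueGroup B (FractionRing B),
      ∀ (a : A) (b : B), τ (mres a) = mres b →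
        e (valuation A (FractionRing A) (algebraMap A (FractionRing A) a)) =
          valuation B (FractionRing B) (algebraMap B (FractionRing B) b) := by
  classical
  obtain ⟨σ, hσ⟩ := hcompat
  -- τ sends the residue of 0 to the residue of 0
  have hzeroA : τ (mres (0 : A)) = mres (0 : B) := by
    set c := (τ (mres (0 : A))).out with hc
    have h1 : τ (mres (0 : A)) = mres c := (Quot.out_eq _).symm
    have h2 : (mres c : MR B) = mres (c * c) := by
      rw [← mres_mul, ← h1, ← hmul, mres_mul, mul_zero]
    obtain ⟨u, hu, he⟩ := mres_eq_iff.mp h2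
    have hcc : c * (c - (1 + u)) = 0 := by linear_combination he
    rcases mul_eq_zero.mp hcc with h0 | h0
    · rw [h1, h0]
    · exfalso
      have hcu : IsUnit c := by
        have : c = 1 + u := by linear_combination h0
        rw [this]; exact isUnit_one_add_mem' hu
      have hres : residue B c ≠ 0 := (residue_ne_zero_iff_isUnit c).mpr hcu
      apply hres
      have := hσ (mres (0 : A))
      rw [h1] at this
      rw [sA_mres] at this
      rw [← sA_mres c, ← this, map_zero]; exact map_zero σ
  have hresA : ∀ (a : A) (b : B), τ (mres a) = mres b → σ (residue A a) = residue B b := by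
    intro a b hab
    have := hσ (mres a)
    rwa [hab, sA_mres, sA_mres] at this
  have hunitA : ∀ a : A, IsUnit a → ∀ b : B, τ (mres a) = mres b → IsUnit b := by
    intro a ha b hab
    rw [← residue_ne_zero_iff_isUnit, ← hresA a b hab]
    intro h
    exact (residue_ne_zero_iff_isUnit a).mpr ha (σ.injective (h.trans (map_zero σ).symm))
  -- the inverse map
  set τ' : MR B → MR A := fun y => (Equiv.ofBijective τ hbij).symm y with hτ'def
  have hττ' : ∀ y, τ (τ' y) = y := fun y => (Equiv.ofBijective τ hbij).apply_symm_apply y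
  have hτ'τ : ∀ x, τ' (τ x) = x := fun x => (Equiv.ofBijective τ hbij).symm_apply_apply x
  have hτ'inj : Function.Injective τ' := fun x y h => by
    rw [← hττ' x, ← hττ' y, h]
  have hτ'mul : ∀ x y : MR B, τ' (x * y) = τ' x * τ' y := by
    intro x y
    apply hbij.1
    rw [hττ', hmul, hττ', hττ']
  have hτ'zero : τ' (mres (0 : B)) = mres (0 : A) := by
    rw [← hzeroA, hτ'τ]
  have hτ'unit : ∀ b : B, IsUnit b → ∀ a : A, τ' (mres b) = mres a → IsUnit a := by
    intro b hb a hab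
    have hab' : τ (mres a) = mres b := by rw [← hab, hττ']
    rw [← residue_ne_zero_iff_isUnit]
    intro h0
    have := hresA a b hab'
    rw [h0] at this
    exact (residue_ne_zero_iff_isUnit b).mpr hb (this.symm.trans (map_zero σ))
  obtain ⟨e, emul, emono, eval⟩ := aux_hom τ hbij.1 hmul hzeroA hunitA
  obtain ⟨e', e'mul, e'mono, e'val⟩ := aux_hom τ' hτ'inj hτ'mul hτ'zero hτ'unit
  have hleft : ∀ γ, e' (e γ) = γ := by
    apply aux_fix_id
    · intro x y; rw [emul, e'mul]
    · intro a
      set b := (τ (mres a)).out with hb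
      have hab : τ (mres a) = mres b := (Quot.out_eq _).symm
      have hba : τ' (mres b) = mres a := by rw [← hab, hτ'τ]
      rw [eval a b hab, e'val b a hba]
  have hright : ∀ γ, e (e' γ) = γ := by
    apply aux_fix_id
    · intro x y; rw [e'mul, emul]
    · intro b
      set a := (τ' (mres b)).out with ha
      have hba : τ' (mres b) = mres a := (Quot.out_eq _).symm
      have hab : τ (mres a) = mres b := by rw [← hba, hττ']
      rw [e'val b a hba, eval a b hab]
  refine ⟨{ toFun := e, invFun := e', left_inv := hleft, right_inv := hright,
            map_mul' := emul, map_le_map_iff' := ?_ }, fun a b h => eval a b h⟩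
  intro x y
  constructor
  · intro h
    have := e'mono _ _ h
    rwa [hleft, hleft] at this
  · exact emono x y
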